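/- Let λ ⊢ n be a Young diagram and M ≥ 1 an integer. If u is a box of λ lying strictly outside the first M hooks (i.e., u = (i,j) with min(i,j) > M), then the hook length of u in λ satisfies H(λ,u) ≤ n/M. -/

import Mathlib

open scoped Classical

/-- Number of standard Young tableaux of an arbitrary finite set of boxes
(rows and columns indexed by `ℕ`): bijective fillings with `1,…,|s|` that are
(weakly, hence strictly) increasing along rows and columns. -/
noncomputable def sytCount (s : Finset (ℕ × ℕ)) : ℕ :=
  Nat.card {f : {p // p ∈ s} ≃ Fin s.card //
    ∀ p q : {p // p ∈ s}, (p : ℕ × ℕ).1 ≤ (q : ℕ × ℕ).1 → (p : ℕ × ℕ).2 ≤ (q : ℕ × ℕ).2 →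
      (f p : ℕ) ≤ (f q : ℕ)}

/-- Hook length of a box `u` in the Young diagram `μ`. -/
noncomputable def hookLen (μ : YoungDiagram) (u : ℕ × ℕ) : ℕ :=
  (μ.cells.filter (fun v => (v.1 = u.1 ∧ u.2 ≤ v.2) ∨ (u.1 ≤ v.1 ∧ v.2 = u.2))).card

/-- One excitation step: a free box of `E` moves diagonally by `(1,1)` inside `μ`. -/
def ExcitedStep (μ : YoungDiagram) (E F : Finset (ℕ × ℕ)) : Prop :=
  ∃ u ∈ E, (u.1 + 1, u.2 + 1) ∈ μ ∧ (u.1 + 1, u.2) ∉ E ∧ (u.1, u.2 + 1) ∉ E ∧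
    (u.1 + 1, u.2 + 1) ∉ E ∧ F = insert (u.1 + 1, u.2 + 1) (E.erase u)

/-- The set of excited diagrams of `E` in `μ`. -/
noncomputable def excitedSet (μ : YoungDiagram) (E : Finset (ℕ × ℕ)) :
    Finset (Finset (ℕ × ℕ)) :=
  μ.cells.powerset.filter (fun F => Relation.ReflTransGen (ExcitedStep μ) E F)

/-- The excited sum `S(μ, E)`. -/
noncomputable def excitedSum (μ : YoungDiagram) (E : Finset (ℕ × ℕ)) : ℕ :=
  ∑ F ∈ excitedSet μ E, ∏ u ∈ F, hookLen μ u

/-- The row diagram `[ℓ]`: the first `ℓ` boxes of the first row. -/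
def rowSeg (ℓ : ℕ) : Finset (ℕ × ℕ) := (Finset.range ℓ).image (fun j => ((0 : ℕ), j))

/-- Diagonal length of a Young diagram. -/
def diagLen (μ : YoungDiagram) : ℕ :=
  ((Finset.range μ.card).filter (fun i => (i, i) ∈ μ)).card

/-- If `λ ⊢ n` and `u` is a box of `λ` lying strictly outside the first `M`
hooks (i.e. `min u.1 u.2 ≥ M` in 0-indexed coordinates), then the hook length
of `u` in `λ` is at most `n/M`. -/
theorem hookLen_le_of_deep (n M : ℕ) (hM : 1 ≤ M) (lam : YoungDiagram)
    (h : lam.card = n) (u : ℕ × ℕ) (hu : u ∈ lam) (hmin : M ≤ min u.1 u.2) :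
    (hookLen lam u : ℝ) ≤ (n : ℝ) / (M : ℝ) := by
  have hi : M ≤ u.1 := le_trans hmin (min_le_left _ _)
  have hj : M ≤ u.2 := le_trans hmin (min_le_right _ _)
  set H : ℕ → Finset (ℕ × ℕ) := fun t =>
    lam.cells.filter (fun v => (v.1 = u.1 - t ∧ u.2 - t ≤ v.2) ∨ (u.1 - t ≤ v.1 ∧ v.2 = u.2 - t))
    with hHdef
  have hcard : ∀ t ∈ Finset.range M, hookLen lam u ≤ (H t).card := by
    intro t ht
    rw [Finset.mem_range] at ht
    apply Finset.card_le_card_of_injOn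
      (fun v => if v.1 = u.1 then (u.1 - t, v.2 - t) else (v.1 - t, u.2 - t))
    · intro v hv
      simp only [hookLen, Finset.mem_coe, Finset.mem_filter, YoungDiagram.mem_cells] at hv
      obtain ⟨hvmem, hcase⟩ := hv
      simp only [hHdef, Finset.mem_coe, Finset.mem_filter, YoungDiagram.mem_cells]
      have hvv : (v.1, v.2) ∈ lam := by simpa using hvmem
      by_cases hcv : v.1 = u.1
      · simp only [hcv, if_pos rfl]
        have hv2 : u.2 ≤ v.2 := by rcases hcase with ⟨a, b⟩ | ⟨a, b⟩ <;> omega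
        constructor
        · exact lam.up_left_mem (Nat.sub_le _ _) (Nat.sub_le _ _) (hcv ▸ hvv)
        · left; exact ⟨rfl, Nat.sub_le_sub_right hv2 t⟩
      · simp only [if_neg hcv]
        rcases hcase with ⟨h1, _⟩ | ⟨h1, h2⟩
        · exact absurd h1 hcv
        constructor
        · exact lam.up_left_mem (Nat.sub_le _ _) (Nat.sub_le _ _) (h2 ▸ hvv)
        · right; exact ⟨Nat.sub_le_sub_right h1 t, trivial⟩
    · intro v1 hv1 v2 hv2 heq
      simp only [hookLen, Finset.coe_filter, Set.mem_setOf_eq, YoungDiagram.mem_cells] at hv1 hv2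
      obtain ⟨-, hc1⟩ := hv1
      obtain ⟨-, hc2⟩ := hv2
      have hb1 : (u.1 ≤ v1.1 ∧ u.2 ≤ v1.2) ∧ (v1.1 = u.1 ∨ v1.2 = u.2) := by
        rcases hc1 with ⟨a, b⟩ | ⟨a, b⟩ <;> omega
      have hb2 : (u.1 ≤ v2.1 ∧ u.2 ≤ v2.2) ∧ (v2.1 = u.1 ∨ v2.2 = u.2) := by
        rcases hc2 with ⟨a, b⟩ | ⟨a, b⟩ <;> omega
      simp only [Prod.ext_iff] at heq ⊢
      by_cases e1 : v1.1 = u.1 <;> by_cases e2 : v2.1 = u.1 <;>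
        simp only [e1, e2, if_pos, if_neg, if_true, if_false, ite_true, ite_false] at heq <;>
        obtain ⟨ha, hb⟩ := heq <;> omega
  have hdisj : ∀ t1 ∈ Finset.range M, ∀ t2 ∈ Finset.range M, t1 ≠ t2 →
      Disjoint (H t1) (H t2) := by
    intro t1 ht1 t2 ht2 hne
    rw [Finset.mem_range] at ht1 ht2
    rw [Finset.disjoint_left]
    intro v hv1 hv2
    simp only [hHdef, Finset.mem_filter] at hv1 hv2
    obtain ⟨-, hc1⟩ := hv1
    obtain ⟨-, hc2⟩ := hv2
    rcases hc1 with ⟨a1, b1⟩ | ⟨a1, b1⟩ <;> rcases hc2 with ⟨a2, b2⟩ | ⟨a2, b2⟩ <;> omega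
  have hsum : M * hookLen lam u ≤ n := by
    calc M * hookLen lam u = ∑ _t ∈ Finset.range M, hookLen lam u := by
          rw [Finset.sum_const, Finset.card_range, smul_eq_mul]
      _ ≤ ∑ t ∈ Finset.range M, (H t).card := Finset.sum_le_sum hcard
      _ = ((Finset.range M).biUnion H).card := (Finset.card_biUnion hdisj).symm
      _ ≤ lam.cells.card := Finset.card_le_card (Finset.biUnion_subset.mpr
            (fun t _ => Finset.filter_subset _ _))
      _ = n := h
  have hMpos : (0 : ℝ) < M := by exact_mod_cast hM
  rw [le_div_iff₀ hMpos]
  have : (hookLen lam u * M : ℕ) ≤ (n : ℕ) := by rw [mul_comm]; exact hsum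
  exact_mod_cast this
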